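/- Let h be a finite dimensional Leibniz algebra. For any commutative bialgebra B and any Leibniz algebra homomorphism f : h → h ⊗ B which makes h into a right B-comodule, there exists a unique bialgebra homomorphism θ : A(h) → B with f = (Id_h ⊗ θ) ∘ η_h. -/

import Mathlib

open TensorProduct MvPolynomial

noncomputable def proj (k : Type*) [Field k] {n : ℕ} (M : Type*) [AddCommGroup M] [Module k M]
    (s : Fin n) : (Fin n → k) ⊗[k] M →ₗ[k] M :=
  (TensorProduct.lid k M).toLinearMap ∘ₗ TensorProduct.map (LinearMap.proj s) LinearMap.id

@[simp] lemma proj_tmul {k : Type*} [Field k] {n : ℕ} (M : Type*) [AddCommGroup M] [Module k M]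
    (s : Fin n) (x : Fin n → k) (m : M) : proj k M s (x ⊗ₜ m) = x s • m := rfl

@[simp] lemma proj_sum_single {k : Type*} [Field k] {n : ℕ} (M : Type*) [AddCommGroup M]
    [Module k M] (a : Fin n) (g : Fin n → M) :
    proj k M a (∑ s : Fin n, Pi.single s 1 ⊗ₜ[k] g s) = g a := by
  simp [Pi.single_apply, ite_smul]

lemma decomp {k : Type*} [Field k] {n : ℕ} (M : Type*) [AddCommGroup M] [Module k M]
    (v : (Fin n → k) ⊗[k] M) :
    v = ∑ s : Fin n, Pi.single s 1 ⊗ₜ[k] proj k M s v := by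
  induction v using TensorProduct.induction_on with
  | zero => simp
  | tmul x m =>
    simp only [proj_tmul, TensorProduct.tmul_smul, TensorProduct.smul_tmul',
      ← TensorProduct.sum_tmul]
    congr 1
    simp only [← Pi.single_smul, smul_eq_mul, mul_one, Finset.univ_sum_single]
  | add x y hx hy =>
    simp only [map_add, TensorProduct.tmul_add, Finset.sum_add_distrib, ← hx, ← hy]

lemma single_expand {k : Type*} [Field k] {n : ℕ} (v : Fin n → k) :
    v = ∑ u : Fin n, v u • (Pi.single u 1 : Fin n → k) := by
  simp only [← Pi.single_smul, smul_eq_mul, mul_one, Finset.univ_sum_single]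


/-- The universal polynomial `P_{(a,i,j)} = Σ_u β^u_{ij} X_{au} - Σ_{s,t} τ^a_{st} X_{si} X_{tj}`. -/
noncomputable def univPoly {k : Type*} [Field k] {n : ℕ} {I : Type*}
    (τ : Fin n → Fin n → Fin n → k) (β : I → I → I →₀ k)
    (a : Fin n) (i j : I) : MvPolynomial (Fin n × I) k :=
  (β i j).sum (fun u c => C c * X (a, u)) -
    ∑ s : Fin n, ∑ t : Fin n, C (τ s t a) * X (s, i) * X (t, j)

/-- The ideal generated by the universal polynomials. -/
noncomputable def univIdeal {k : Type*} [Field k] {n : ℕ} {I : Type*}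
    (τ : Fin n → Fin n → Fin n → k) (β : I → I → I →₀ k) :
    Ideal (MvPolynomial (Fin n × I) k) :=
  Ideal.span (Set.range fun p : Fin n × I × I => univPoly τ β p.1 p.2.1 p.2.2)

/-- The universal algebra `A(h,g)`. -/
noncomputable abbrev univAlg {k : Type*} [Field k] {n : ℕ} {I : Type*}
    (τ : Fin n → Fin n → Fin n → k) (β : I → I → I →₀ k) :=
  MvPolynomial (Fin n × I) k ⧸ univIdeal τ β

/-- The generator `x_{si}` of `A(h,g)`. -/
noncomputable def univGen {k : Type*} [Field k] {n : ℕ} {I : Type*}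
    (τ : Fin n → Fin n → Fin n → k) (β : I → I → I →₀ k)
    (s : Fin n) (i : I) : univAlg τ β :=
  Ideal.Quotient.mk (univIdeal τ β) (X (s, i))

/-- The universal ideal of a single `n`-dimensional Leibniz algebra `h`
(with structure constants `τ`), inside `M(n) = k[X_{ij}]`. -/
noncomputable abbrev univIdealH {k : Type*} [Field k] {n : ℕ}
    (τ : Fin n → Fin n → Fin n → k) : Ideal (MvPolynomial (Fin n × Fin n) k) :=
  univIdeal τ (fun i j => Finsupp.equivFunOnFinite.symm (τ i j))

/-- The universal algebra `A(h) = A(h,h)` of an `n`-dimensional Leibniz algebra. -/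
noncomputable abbrev univAlgH {k : Type*} [Field k] {n : ℕ}
    (τ : Fin n → Fin n → Fin n → k) :=
  univAlg τ (fun i j => Finsupp.equivFunOnFinite.symm (τ i j))

/-- The generator `x_{ij}` of `A(h)`. -/
noncomputable abbrev univGenH {k : Type*} [Field k] {n : ℕ}
    (τ : Fin n → Fin n → Fin n → k) (i j : Fin n) : univAlgH τ :=
  univGen τ (fun i j => Finsupp.equivFunOnFinite.symm (τ i j)) i j

/-- The comultiplication of the matrix bialgebra `M(n) = k[X_{ij}]`:
`Δ(X_{ij}) = Σ_s X_{is} ⊗ X_{sj}`. -/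
noncomputable def deltaM (k : Type*) [Field k] (n : ℕ) :
    MvPolynomial (Fin n × Fin n) k →ₐ[k]
      MvPolynomial (Fin n × Fin n) k ⊗[k] MvPolynomial (Fin n × Fin n) k :=
  MvPolynomial.aeval (fun p : Fin n × Fin n =>
    ∑ s : Fin n, MvPolynomial.X (p.1, s) ⊗ₜ[k] MvPolynomial.X (s, p.2))

/-- The counit of the matrix bialgebra `M(n)`: `ε(X_{ij}) = δ_{ij}`. -/
noncomputable def epsM (k : Type*) [Field k] (n : ℕ) :
    MvPolynomial (Fin n × Fin n) k →ₐ[k] k :=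
  MvPolynomial.aeval (fun p : Fin n × Fin n => if p.1 = p.2 then 1 else 0)

set_option maxHeartbeats 3200000 in
set_option synthInstance.maxHeartbeats 400000 in
/-- universal property of the bialgebra `A(h)`: for any commutative
bialgebra `B` and any Leibniz algebra homomorphism `f : h → h ⊗ B` making `h` a right
`B`-comodule, there is a unique bialgebra homomorphism `θ : A(h) → B` with
`f = (Id_h ⊗ θ) ∘ η_h`. -/
theorem stmt_14 (k : Type*) [Field k] (n : ℕ) (τ : Fin n → Fin n → Fin n → k)
    (bH : (Fin n → k) →ₗ[k] (Fin n → k) →ₗ[k] (Fin n → k))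
    (hbH : ∀ i j : Fin n, bH (Pi.single i 1) (Pi.single j 1) = fun s => τ i j s)
    (hLH : ∀ x y z, bH x (bH y z) = bH (bH x y) z - bH (bH x z) y)
    (ΔA : univAlgH τ →ₐ[k] univAlgH τ ⊗[k] univAlgH τ) (εA : univAlgH τ →ₐ[k] k)
    (hΔ : ∀ i j : Fin n, ΔA (univGenH τ i j) =
      ∑ s : Fin n, univGenH τ i s ⊗ₜ[k] univGenH τ s j)
    (hε : ∀ i j : Fin n, εA (univGenH τ i j) = if i = j then 1 else 0)
    (η : (Fin n → k) →ₗ[k] (Fin n → k) ⊗[k] univAlgH τ)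
    (hη : ∀ i : Fin n, η (Pi.single i 1) =
      ∑ s : Fin n, Pi.single s 1 ⊗ₜ[k] univGenH τ s i)
    (B : Type*) [CommRing B] [Bialgebra k B]
    (BB : (Fin n → k) ⊗[k] B →ₗ[k] (Fin n → k) ⊗[k] B →ₗ[k] (Fin n → k) ⊗[k] B)
    (hBB : ∀ (x y : Fin n → k) (a c : B),
      BB (x ⊗ₜ[k] a) (y ⊗ₜ[k] c) = bH x y ⊗ₜ[k] (a * c))
    (f : (Fin n → k) →ₗ[k] (Fin n → k) ⊗[k] B)
    (hf : ∀ u v : Fin n → k, f (bH u v) = BB (f u) (f v))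
    (hcoassoc : ∀ v : Fin n → k,
      (TensorProduct.assoc k (Fin n → k) B B) ((TensorProduct.map f LinearMap.id) (f v)) =
        (TensorProduct.map LinearMap.id (Coalgebra.comul (R := k) (A := B))) (f v))
    (hcounit : ∀ v : Fin n → k,
      (TensorProduct.rid k (Fin n → k))
        ((TensorProduct.map LinearMap.id (Coalgebra.counit (R := k) (A := B))) (f v)) = v) :
    ∃! θ : univAlgH τ →ₐ[k] B,
      (Coalgebra.comul (R := k) (A := B) ∘ₗ θ.toLinearMap =
        TensorProduct.map θ.toLinearMap θ.toLinearMap ∘ₗ ΔA.toLinearMap) ∧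
      (Coalgebra.counit (R := k) (A := B) ∘ₗ θ.toLinearMap = εA.toLinearMap) ∧
      TensorProduct.map LinearMap.id θ.toLinearMap ∘ₗ η = f := by
  classical
  set b : Fin n → Fin n → B := fun s i => proj k B s (f (Pi.single i 1)) with hbdef
  have hb : ∀ i : Fin n, f (Pi.single i 1) = ∑ s : Fin n, Pi.single s 1 ⊗ₜ[k] b s i :=
    fun i => decomp B (f (Pi.single i 1))
  have hfv : ∀ v : Fin n → k,
      f v = ∑ s : Fin n, Pi.single s 1 ⊗ₜ[k] (∑ u : Fin n, v u • b s u) := by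
    intro v
    conv_lhs => rw [single_expand v]
    rw [map_sum]
    simp only [map_smul, hb, Finset.smul_sum, TensorProduct.tmul_smul]
    rw [Finset.sum_comm]
    simp [TensorProduct.tmul_sum]
  -- the key quadratic relation among the b's
  have key : ∀ (a i j : Fin n),
      ∑ u : Fin n, τ i j u • b a u = ∑ s : Fin n, ∑ t : Fin n, τ s t a • (b s i * b t j) := by
    intro a i j
    have h1 := hf (Pi.single i 1) (Pi.single j 1)
    rw [hbH] at h1
    have hLHS : proj k B a (f fun s => τ i j s) = ∑ u : Fin n, τ i j u • b a u := by
      rw [hfv]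
      simp [Pi.single_apply, ite_smul]
    have hRHS : proj k B a (BB (f (Pi.single i 1)) (f (Pi.single j 1))) =
        ∑ s : Fin n, ∑ t : Fin n, τ s t a • (b s i * b t j) := by
      rw [hb i, hb j]
      simp only [map_sum, LinearMap.sum_apply, hBB, hbH, proj_tmul]
      rw [Finset.sum_comm]
    rw [← hLHS, ← hRHS, h1]
  -- the algebra map out of the polynomial ring
  set θ0 : MvPolynomial (Fin n × Fin n) k →ₐ[k] B :=
    MvPolynomial.aeval (fun p : Fin n × Fin n => b p.1 p.2) with hθ0def
  have hkill : ∀ p ∈ univIdealH τ, θ0 p = 0 := by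
    intro p hp
    have hsub : (Set.range fun q : Fin n × Fin n × Fin n =>
        univPoly τ (fun i j => Finsupp.equivFunOnFinite.symm (τ i j)) q.1 q.2.1 q.2.2) ⊆
        (RingHom.ker θ0.toRingHom : Set (MvPolynomial (Fin n × Fin n) k)) := by
      rintro _ ⟨⟨a, i, j⟩, rfl⟩
      simp only [SetLike.mem_coe, RingHom.mem_ker]
      show θ0 (univPoly τ (fun i j => Finsupp.equivFunOnFinite.symm (τ i j)) a i j) = 0
      rw [univPoly, map_sub, map_finsuppSum]
      rw [Finsupp.sum_fintype _ _ (by intro u; simp)]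
      simp only [map_mul, map_sum, aeval_C, aeval_X, hθ0def]
      rw [sub_eq_zero]
      have := key a i j
      simp only [Algebra.smul_def] at this
      simpa [mul_assoc] using this
    have : univIdealH τ ≤ RingHom.ker θ0.toRingHom := Ideal.span_le.mpr hsub
    exact this hp
  set θ : univAlgH τ →ₐ[k] B := Ideal.Quotient.liftₐ (univIdealH τ) θ0 hkill with hθdef
  have hθgen : ∀ s i : Fin n, θ (univGenH τ s i) = b s i := by
    intro s i
    show θ (Ideal.Quotient.mk (univIdealH τ) (X (s, i))) = b s i
    rw [hθdef, Ideal.Quotient.liftₐ_apply]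
    erw [Ideal.Quotient.lift_mk]
    simp [hθ0def]
  -- counit values
  have hcounitb : ∀ a i : Fin n,
      Coalgebra.counit (R := k) (b a i) = if a = i then (1:k) else 0 := by
    intro a i
    have h2 := hcounit (Pi.single i 1)
    rw [hb i] at h2
    simp only [map_sum, map_sum, TensorProduct.map_tmul, LinearMap.id_coe, id_eq,
      TensorProduct.rid_tmul] at h2
    have h3 := congrFun h2 a
    simpa [Finset.sum_apply, Pi.single_apply] using h3
  -- comul values
  have hcomulb : ∀ a i : Fin n,
      Coalgebra.comul (R := k) (b a i) = ∑ s : Fin n, b a s ⊗ₜ[k] b s i := by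
    intro a i
    have h2 := hcoassoc (Pi.single i 1)
    rw [hb i] at h2
    simp only [map_sum, map_sum, TensorProduct.map_tmul, LinearMap.id_coe, id_eq] at h2
    simp only [hb] at h2
    simp only [TensorProduct.sum_tmul, map_sum, map_sum, TensorProduct.assoc_tmul] at h2
    have h3 := congrArg (proj k (B ⊗[k] B) a) h2
    simp only [map_sum, proj_tmul, Pi.single_apply, ite_smul, one_smul, zero_smul,
      Finset.sum_ite_eq', Finset.mem_univ, if_true] at h3
    rw [Finset.sum_comm] at h3
    simpa [proj_sum_single] using h3.symm
  -- the three conditions for θ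
  have hcond3 : TensorProduct.map LinearMap.id θ.toLinearMap ∘ₗ η = f := by
    apply (Pi.basisFun k (Fin n)).ext
    intro i
    have hbasis : (Pi.basisFun k (Fin n)) i = Pi.single i 1 := by
      ext j; simp [Pi.basisFun_apply, Pi.single_apply]
    rw [hbasis, LinearMap.comp_apply, hη, map_sum, hb]
    simp [hθgen]
  have hmapLin : ∀ y : univAlgH τ ⊗[k] univAlgH τ,
      TensorProduct.map θ.toLinearMap θ.toLinearMap y = Algebra.TensorProduct.map θ θ y := by
    intro y
    induction y using TensorProduct.induction_on with
    | zero => simp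
    | tmul x z => simp
    | add u v hu hv => simp [map_add, hu, hv]
  have hcond1 : Coalgebra.comul (R := k) (A := B) ∘ₗ θ.toLinearMap =
      TensorProduct.map θ.toLinearMap θ.toLinearMap ∘ₗ ΔA.toLinearMap := by
    have hAlg : (Bialgebra.comulAlgHom k B).comp θ = (Algebra.TensorProduct.map θ θ).comp ΔA := by
      apply Ideal.Quotient.algHom_ext
      apply MvPolynomial.algHom_ext
      rintro ⟨s, i⟩
      show Bialgebra.comulAlgHom k B (θ (univGenH τ s i)) =
        Algebra.TensorProduct.map θ θ (ΔA (univGenH τ s i))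
      rw [hθgen, hΔ, map_sum]
      simp [Bialgebra.comulAlgHom_apply, hcomulb, hθgen]
    refine LinearMap.ext fun x => ?_
    have := AlgHom.congr_fun hAlg x
    simpa [Bialgebra.comulAlgHom_apply, hmapLin] using this
  have hcond2 : Coalgebra.counit (R := k) (A := B) ∘ₗ θ.toLinearMap = εA.toLinearMap := by
    have hAlg : (Bialgebra.counitAlgHom k B).comp θ = εA := by
      apply Ideal.Quotient.algHom_ext
      apply MvPolynomial.algHom_ext
      rintro ⟨s, i⟩
      show Bialgebra.counitAlgHom k B (θ (univGenH τ s i)) = εA (univGenH τ s i)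
      rw [hθgen, hε]
      simpa [Bialgebra.counitAlgHom_apply] using hcounitb s i
    refine LinearMap.ext fun x => ?_
    have := AlgHom.congr_fun hAlg x
    simpa [Bialgebra.counitAlgHom_apply] using this
  refine ⟨θ, ⟨hcond1, hcond2, hcond3⟩, ?_⟩
  rintro θ' ⟨-, -, h3'⟩
  have hgen' : ∀ s i : Fin n, θ' (univGenH τ s i) = b s i := by
    intro s i
    have h4 := LinearMap.congr_fun h3' (Pi.single i 1)
    rw [LinearMap.comp_apply, hη, map_sum, hb] at h4
    have h5 := congrArg (proj k B s) h4
    simpa [Pi.single_apply, ite_smul] using h5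
  apply Ideal.Quotient.algHom_ext
  apply MvPolynomial.algHom_ext
  rintro ⟨s, i⟩
  show θ' (univGenH τ s i) = θ (univGenH τ s i)
  rw [hgen', hθgen]
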